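/- Let D and M be symmetric positive definite N×N matrices with D ≥ c₀ M in the Loewner order for some c₀ > 0, let A be symmetric positive definite, and let B satisfy uᵀ Bᵀ M⁻¹ B u ≤ d · uᵀ A u for all u and some d > 0. Then for ε, μ, α > 0, the Schur complement S̃ = (ε/μ) D + (αε/μ)² B (εA + A₀)⁻¹ Bᵀ, where A₀ = Bᵀ M⁻¹ B, satisfies (ε/μ) D ≤ S̃ ≤ (ε/μ)(1 + α²d/(c₀ μ)) D in the Loewner order. -/

import Mathlib

open Matrix

private lemma smul_herm {k : ℕ} (c : ℝ) {P : Matrix (Fin k) (Fin k) ℝ}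
    (hP : P.IsHermitian) : (c • P).IsHermitian := by
  unfold Matrix.IsHermitian
  rw [conjTranspose_smul, hP.eq, star_trivial]

private lemma smul_posSemidef' {k : ℕ} {c : ℝ} (hc : 0 ≤ c) {P : Matrix (Fin k) (Fin k) ℝ}
    (hP : P.PosSemidef) : (c • P).PosSemidef := by
  refine Matrix.PosSemidef.of_dotProduct_mulVec_nonneg (smul_herm c hP.1) (fun x => ?_)
  rw [smul_mulVec, dotProduct_smul, smul_eq_mul]
  exact mul_nonneg hc (hP.dotProduct_mulVec_nonneg x)

private lemma smul_posDef' {k : ℕ} {c : ℝ} (hc : 0 < c) {P : Matrix (Fin k) (Fin k) ℝ}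
    (hP : P.PosDef) : (c • P).PosDef := by
  refine Matrix.PosDef.of_dotProduct_mulVec_pos (smul_herm c hP.1) (fun ⦃x⦄ hx => ?_)
  rw [smul_mulVec, dotProduct_smul, smul_eq_mul]
  exact mul_pos hc (hP.dotProduct_mulVec_pos hx)

private lemma real_star_vec {k : ℕ} (x : Fin k → ℝ) : star x = x := by
  funext i; simp

private lemma cs_aux {k : ℕ} {M : Matrix (Fin k) (Fin k) ℝ} (hM : M.PosDef)
    (v w : Fin k → ℝ) : (v ⬝ᵥ w) ^ 2 ≤ (v ⬝ᵥ M *ᵥ v) * (w ⬝ᵥ M⁻¹ *ᵥ w) := by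
  have hMi : (M⁻¹).PosDef := hM.inv
  by_cases hw : w = 0
  · simp [hw]
  · set a := v ⬝ᵥ M *ᵥ v with ha
    set b := w ⬝ᵥ M⁻¹ *ᵥ w with hbdef
    set p := v ⬝ᵥ w with hp
    have hb : 0 < b := by
      have := hMi.dotProduct_mulVec_pos hw
      rwa [real_star_vec] at this
    have hMMi : M * M⁻¹ = 1 := Matrix.mul_nonsing_inv M hM.det_pos.ne'.isUnit
    have hMtr : Mᵀ = M := by
      have := hM.1.eq
      rwa [Matrix.conjTranspose_eq_transpose_of_trivial] at this
    have symm : ∀ x y : Fin k → ℝ, x ⬝ᵥ M *ᵥ y = y ⬝ᵥ M *ᵥ x := by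
      intro x y
      rw [dotProduct_mulVec, ← mulVec_transpose, hMtr, dotProduct_comm]
    have h1 : v ⬝ᵥ M *ᵥ (M⁻¹ *ᵥ w) = p := by
      rw [mulVec_mulVec, hMMi, one_mulVec]
    have h3 : (M⁻¹ *ᵥ w) ⬝ᵥ M *ᵥ (M⁻¹ *ᵥ w) = b := by
      rw [mulVec_mulVec, hMMi, one_mulVec, dotProduct_comm]
    have key := hM.posSemidef.dotProduct_mulVec_nonneg (b • v - p • (M⁻¹ *ᵥ w))
    rw [real_star_vec] at key
    have expand : (b • v - p • (M⁻¹ *ᵥ w)) ⬝ᵥ M *ᵥ (b • v - p • (M⁻¹ *ᵥ w))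
        = b ^ 2 * a - b * (p ^ 2) := by
      rw [mulVec_sub, mulVec_smul, mulVec_smul]
      simp only [sub_dotProduct, dotProduct_sub, smul_dotProduct, dotProduct_smul, smul_eq_mul]
      rw [h1, h3, symm (M⁻¹ *ᵥ w) v, h1]
      ring
    rw [expand] at key
    nlinarith [key, hb]

theorem two_field_schur_bounds {n N : ℕ}
    (A : Matrix (Fin n) (Fin n) ℝ) (M D : Matrix (Fin N) (Fin N) ℝ)
    (B : Matrix (Fin N) (Fin n) ℝ) (ε μ α c₀ d : ℝ)
    (hA : A.PosDef) (hM : M.PosDef) (hD : D.PosDef)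
    (hDM : (D - c₀ • M).PosSemidef)
    (hε : 0 < ε) (hμ : 0 < μ) (hα : 0 < α) (hc₀ : 0 < c₀) (hd : 0 < d)
    (hbound : ∀ u : Fin n → ℝ,
      u ⬝ᵥ (Bᵀ * M⁻¹ * B).mulVec u ≤ d * (u ⬝ᵥ A.mulVec u)) :
    (((ε / μ) • D + ((α * ε / μ) ^ 2) • (B * (ε • A + Bᵀ * M⁻¹ * B)⁻¹ * Bᵀ))
        - (ε / μ) • D).PosSemidef ∧
    ((ε / μ * (1 + α ^ 2 * d / (c₀ * μ))) • D
        - ((ε / μ) • D + ((α * ε / μ) ^ 2) • (B * (ε • A + Bᵀ * M⁻¹ * B)⁻¹ * Bᵀ))).PosSemidef := by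
  set A₀ : Matrix (Fin n) (Fin n) ℝ := Bᵀ * M⁻¹ * B with hA₀def
  have hBt : (Bᵀ)ᴴ = B := by ext i j; simp [Matrix.conjTranspose]
  have hBh : Bᴴ = Bᵀ := by ext i j; simp [Matrix.conjTranspose]
  have hA₀psd : A₀.PosSemidef := by
    have := Matrix.PosSemidef.mul_mul_conjTranspose_same hM.inv.posSemidef Bᵀ
    rwa [hBt] at this
  have hC : (ε • A + A₀).PosDef := Matrix.PosDef.add_posSemidef (smul_posDef' hε hA) hA₀psd
  set C : Matrix (Fin n) (Fin n) ℝ := ε • A + A₀ with hCdef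
  have hCinv : (C⁻¹).PosDef := hC.inv
  have hX : (B * C⁻¹ * Bᵀ).PosSemidef := by
    have := Matrix.PosSemidef.mul_mul_conjTranspose_same hCinv.posSemidef B
    rwa [hBh] at this
  constructor
  · rw [add_sub_cancel_left]
    exact smul_posSemidef' (sq_nonneg _) hX
  · refine Matrix.PosSemidef.of_dotProduct_mulVec_nonneg ?_ (fun x => ?_)
    · exact Matrix.IsHermitian.sub (smul_herm _ hD.1)
        (Matrix.IsHermitian.add (smul_herm _ hD.1) (smul_herm _ hX.1))
    · rw [real_star_vec]
      set q := x ⬝ᵥ D *ᵥ x with hq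
      set m := x ⬝ᵥ M *ᵥ x with hm
      set s := x ⬝ᵥ (B * C⁻¹ * Bᵀ) *ᵥ x with hs
      have hm0 : 0 ≤ m := by
        have := hM.posSemidef.dotProduct_mulVec_nonneg x; rwa [real_star_vec] at this
      have hs0 : 0 ≤ s := by
        have := hX.dotProduct_mulVec_nonneg x; rwa [real_star_vec] at this
      have h1 : c₀ * m ≤ q := by
        have := hDM.dotProduct_mulVec_nonneg x
        rw [real_star_vec, sub_mulVec, smul_mulVec, dotProduct_sub, dotProduct_smul,
          smul_eq_mul] at this
        linarith
      -- key estimate: ε * s ≤ d * m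
      have h2 : ε * s ≤ d * m := by
        set u := C⁻¹ *ᵥ (Bᵀ *ᵥ x) with hu
        have hCCi : C * C⁻¹ = 1 := Matrix.mul_nonsing_inv C hC.det_pos.ne'.isUnit
        have hCu : C *ᵥ u = Bᵀ *ᵥ x := by
          rw [hu, mulVec_mulVec, hCCi, one_mulVec]
        have hsBu : s = x ⬝ᵥ (B *ᵥ u) := by
          rw [hs, ← mulVec_mulVec, ← mulVec_mulVec, ← hu]
        have hsCu : s = u ⬝ᵥ C *ᵥ u := by
          rw [hsBu, dotProduct_mulVec, ← mulVec_transpose, ← hCu, dotProduct_comm]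
        have hA0u := hbound u
        have hCexp : u ⬝ᵥ C *ᵥ u = ε * (u ⬝ᵥ A *ᵥ u) + u ⬝ᵥ A₀ *ᵥ u := by
          rw [hCdef, add_mulVec, smul_mulVec, dotProduct_add, dotProduct_smul, smul_eq_mul]
        have hA0nn : 0 ≤ u ⬝ᵥ A₀ *ᵥ u := by
          have := hA₀psd.dotProduct_mulVec_nonneg u; rwa [real_star_vec] at this
        have hεA : ε * (u ⬝ᵥ A *ᵥ u) ≤ s := by
          rw [hsCu, hCexp]; linarith
        have hA0eq : u ⬝ᵥ A₀ *ᵥ u = (B *ᵥ u) ⬝ᵥ M⁻¹ *ᵥ (B *ᵥ u) := by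
          rw [hA₀def, ← Matrix.mulVec_mulVec, ← Matrix.mulVec_mulVec,
            Matrix.dotProduct_mulVec u, Matrix.vecMul_transpose]
        have hcs : s ^ 2 ≤ m * (u ⬝ᵥ A₀ *ᵥ u) := by
          rw [hA0eq, hsBu]
          exact cs_aux hM x (B *ᵥ u)
        rcases hs0.eq_or_lt with hz | hz
        · rw [← hz, mul_zero]
          exact mul_nonneg hd.le hm0
        · nlinarith [hcs, mul_le_mul_of_nonneg_left hA0u hm0, hεA, hz, hm0, hε.le, hd.le,
            mul_le_mul_of_nonneg_left hεA (mul_nonneg hd.le hm0)]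
      -- conclude
      have haq : 0 ≤ d * q - c₀ * (ε * s) := by
        nlinarith [mul_le_mul_of_nonneg_left h1 hd.le, mul_le_mul_of_nonneg_left h2 hc₀.le]
      have keyineq : 0 ≤ (ε * α ^ 2 / (c₀ * μ ^ 2)) * (d * q - c₀ * (ε * s)) :=
        mul_nonneg (by positivity) haq
      have eqn : (ε / μ * (1 + α ^ 2 * d / (c₀ * μ))) * q - ((ε / μ) * q + (α * ε / μ) ^ 2 * s)
          = (ε * α ^ 2 / (c₀ * μ ^ 2)) * (d * q - c₀ * (ε * s)) := by
        field_simp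
        ring
      simp only [sub_mulVec, add_mulVec, smul_mulVec, dotProduct_sub, dotProduct_add,
        dotProduct_smul, smul_eq_mul]
      rw [← hq, ← hs]
      linarith [keyineq, eqn]
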